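/- arXiv:1110.6269 — 3 statements merged into one kernel-verified Lean document; each statement's English description precedes it below -/
import Mathlib

section
/- Let E be a real normed space and D ⊊ E a domain. For any rectifiable curve γ : [0, L] → D parametrized by arc length, joining z₁ to z₂, the quasihyperbolic length satisfies ∫₀^L dt / dist(γ(t), ∂D) ≥ log(1 + L / dist(z₁, ∂D)) ≥ log(1 + |z₁ - z₂| / dist(z₁, ∂D)). -/
open Metric Set

variable {E : Type*} [NormedAddCommGroup E] [NormedSpace ℝ E]

/-- The quasihyperbolic length of a curve `γ : [0, L] → D` parametrized by
arc length (1-Lipschitz), in the domain `D`: `∫₀^L dt / dist(γ t, Dᶜ)`. -/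
noncomputable def qhLength (D : Set E) (γ : ℝ → E) (L : ℝ) : ℝ :=
  ∫ t in (0:ℝ)..L, 1 / infDist (γ t) Dᶜ

/-- `γ : [0, L] → D` is an admissible (rectifiable, arc-length parametrized)
curve joining `x` to `y` in `D`. -/
def IsQHPath (D : Set E) (x y : E) (γ : ℝ → E) (L : ℝ) : Prop :=
  0 ≤ L ∧ LipschitzOnWith 1 γ (Icc 0 L) ∧ γ 0 = x ∧ γ L = y ∧
    ∀ t ∈ Icc 0 L, γ t ∈ D

/-- The quasihyperbolic distance in the domain `D`: the infimum of
quasihyperbolic lengths of rectifiable curves joining `x` and `y` in `D`. -/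
noncomputable def qhDist (D : Set E) (x y : E) : ℝ :=
  ⨅ p : {p : (ℝ → E) × ℝ // IsQHPath D x y p.1 p.2}, qhLength D p.1.1 p.1.2

/-- The `j`-metric of the domain `D`. -/
noncomputable def jDist (D : Set E) (x y : E) : ℝ :=
  Real.log (1 + ‖x - y‖ / min (infDist x Dᶜ) (infDist y Dᶜ))

theorem stmt_5 (D : Set E) (hD : IsOpen D) (hconn : IsConnected D)
    (hne : D ≠ univ) (z₁ z₂ : E) (L : ℝ) (γ : ℝ → E)
    (hpath : IsQHPath D z₁ z₂ γ L) :
    Real.log (1 + L / infDist z₁ Dᶜ) ≤ qhLength D γ L ∧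
    Real.log (1 + ‖z₁ - z₂‖ / infDist z₁ Dᶜ) ≤
      Real.log (1 + L / infDist z₁ Dᶜ) := by
  obtain ⟨hL, hlip, h0, hE, hmem⟩ := hpath
  have hcompl : Dᶜ.Nonempty := by
    exact Set.nonempty_compl.mpr hne
  set d := infDist z₁ Dᶜ with hd_def
  have hz₁ : z₁ ∈ D := h0 ▸ hmem 0 ⟨le_refl 0, hL⟩
  have hd : 0 < d :=
    (hD.isClosed_compl.notMem_iff_infDist_pos hcompl).1 (by simpa using hz₁)
  have hpos : ∀ t ∈ Icc (0:ℝ) L, 0 < infDist (γ t) Dᶜ := fun t ht =>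
    (hD.isClosed_compl.notMem_iff_infDist_pos hcompl).1 (by simpa using hmem t ht)
  have hdist : ∀ t ∈ Icc (0:ℝ) L, dist (γ t) z₁ ≤ t := by
    intro t ht
    have := hlip.dist_le_mul t ht 0 ⟨le_refl 0, hL⟩
    rw [h0] at this
    simpa [Real.dist_eq, abs_of_nonneg ht.1] using this
  have hle : ∀ t ∈ Icc (0:ℝ) L, infDist (γ t) Dᶜ ≤ d + t := by
    intro t ht
    calc infDist (γ t) Dᶜ ≤ infDist z₁ Dᶜ + dist (γ t) z₁ :=
          infDist_le_infDist_add_dist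
      _ ≤ d + t := by have := hdist t ht; linarith
  -- continuity of the integrand
  have hγcont : ContinuousOn γ (Icc 0 L) := hlip.continuousOn
  have hcont : ContinuousOn (fun t => 1 / infDist (γ t) Dᶜ) (Icc 0 L) := by
    apply ContinuousOn.div continuousOn_const
    · exact (continuous_infDist_pt _).comp_continuousOn hγcont
    · intro t ht; exact (hpos t ht).ne'
  have hint : IntervalIntegrable (fun t => 1 / infDist (γ t) Dᶜ)
      MeasureTheory.volume 0 L := by
    apply ContinuousOn.intervalIntegrable
    rwa [uIcc_of_le hL]
  have hint2 : IntervalIntegrable (fun t => 1 / (d + t))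
      MeasureTheory.volume 0 L := by
    apply ContinuousOn.intervalIntegrable
    apply ContinuousOn.div continuousOn_const
    · exact (continuous_const.add continuous_id).continuousOn
    · intro t ht
      rw [uIcc_of_le hL] at ht
      have := ht.1; positivity
  have key : ∫ t in (0:ℝ)..L, 1 / (d + t) = Real.log (1 + L / d) := by
    rw [intervalIntegral.integral_comp_add_left (fun x => 1 / x) d]
    rw [integral_one_div]
    · rw [add_zero]
      congr 1
      field_simp
    · rw [add_zero]
      intro h
      rw [uIcc_of_le (by linarith : d ≤ d + L)] at h
      have := h.1; linarith
  constructor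
  · rw [qhLength, ← key]
    apply intervalIntegral.integral_mono_on hL hint2 hint
    intro t ht
    apply one_div_le_one_div_of_le (hpos t ht)
    exact hle t ht
  · apply Real.log_le_log
    · have : 0 ≤ ‖z₁ - z₂‖ / d := by positivity
      linarith
    · have hzz : ‖z₁ - z₂‖ ≤ L := by
        have := hlip.dist_le_mul 0 ⟨le_refl 0, hL⟩ L ⟨hL, le_refl L⟩
        rw [h0, hE] at this
        simpa [dist_eq_norm, Real.dist_eq, abs_of_nonneg hL] using this
      gcongr
end

section
/- Let E be a real normed space, D ⊊ E a domain, and z₁, z₂ ∈ D. Then the quasihyperbolic distance satisfies k_D(z₁, z₂) ≥ log(1 + |z₁ - z₂| / min(dist(z₁, ∂D), dist(z₂, ∂D))). -/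
open Metric Set

variable {E : Type*} [NormedAddCommGroup E] [NormedSpace ℝ E]

set_option linter.unusedSectionVars false


lemma qhPath_segment (D : Set E) {x y : E} (h : segment ℝ x y ⊆ D) :
    ∃ γ L, IsQHPath D x y γ L := by
  by_cases hxy : x = y
  · subst hxy
    exact ⟨fun _ => x, 0, le_refl 0, fun a _ b _ => by simp, rfl, rfl,
      fun t _ => h (left_mem_segment ℝ x x)⟩
  · have hL0 : 0 < ‖y - x‖ := norm_pos_iff.mpr (sub_ne_zero.2 (Ne.symm hxy))
    set L := ‖y - x‖ with hL
    refine ⟨fun t => x + (t * L⁻¹) • (y - x), L, hL0.le, ?_, by simp, ?_, ?_⟩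
    · rw [lipschitzOnWith_iff_dist_le_mul]
      intro s hs t ht
      rw [NNReal.coe_one, one_mul, dist_eq_norm, dist_eq_norm,
        add_sub_add_left_eq_sub, ← sub_smul, ← sub_mul, norm_smul, norm_mul, norm_inv,
        norm_norm]
      rw [mul_assoc, inv_mul_cancel₀ hL0.ne', mul_one]
    · show x + (L * L⁻¹) • (y - x) = y
      rw [mul_inv_cancel₀ hL0.ne', one_smul]; abel
    · intro t ht
      apply h
      rw [segment_eq_image']
      exact ⟨t * L⁻¹, ⟨mul_nonneg ht.1 (by positivity), by
        rw [← mul_inv_cancel₀ hL0.ne']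
        exact mul_le_mul_of_nonneg_right ht.2 (by positivity)⟩, rfl⟩

lemma qhPath_trans {D : Set E} {x y z : E}
    (h₁ : ∃ γ L, IsQHPath D x y γ L) (h₂ : ∃ γ L, IsQHPath D y z γ L) :
    ∃ γ L, IsQHPath D x z γ L := by
  obtain ⟨γ₁, L₁, hL₁, hlip₁, h0₁, hE₁, hmem₁⟩ := h₁
  obtain ⟨γ₂, L₂, hL₂, hlip₂, h0₂, hE₂, hmem₂⟩ := h₂
  rw [lipschitzOnWith_iff_dist_le_mul] at hlip₁ hlip₂
  set g : ℝ → E := fun t => if t ≤ L₁ then γ₁ t else γ₂ (t - L₁) with hg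
  have key : ∀ s ∈ Icc (0:ℝ) (L₁ + L₂), ∀ t ∈ Icc (0:ℝ) (L₁ + L₂), s ≤ t →
      dist (g s) (g t) ≤ t - s := by
    intro s hs t ht hst
    by_cases hsL : s ≤ L₁ <;> by_cases htL : t ≤ L₁ <;>
      simp only [hg, hsL, htL, if_pos, if_neg, if_true, if_false]
    · calc dist (γ₁ s) (γ₁ t) ≤ 1 * dist s t :=
            hlip₁ s ⟨hs.1, hsL⟩ t ⟨ht.1, htL⟩
        _ = t - s := by rw [one_mul, Real.dist_eq, abs_of_nonpos (by linarith)]; ring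
    · push_neg at htL
      calc dist (γ₁ s) (γ₂ (t - L₁))
          ≤ dist (γ₁ s) (γ₁ L₁) + dist (γ₂ 0) (γ₂ (t - L₁)) := by
            rw [hE₁, ← h0₂]; exact dist_triangle _ _ _
        _ ≤ 1 * dist s L₁ + 1 * dist 0 (t - L₁) := by
            gcongr
            · exact hlip₁ s ⟨hs.1, hsL⟩ L₁ ⟨hL₁, le_refl _⟩
            · exact hlip₂ 0 ⟨le_refl _, hL₂⟩ (t - L₁) ⟨by linarith, by linarith [ht.2]⟩
        _ = (L₁ - s) + (t - L₁) := by
            rw [one_mul, one_mul, Real.dist_eq, Real.dist_eq,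
              abs_of_nonpos (by linarith), abs_of_nonpos (by linarith)]; ring
        _ = t - s := by ring
    · exact absurd (hst.trans htL) hsL
    · push_neg at hsL
      calc dist (γ₂ (s - L₁)) (γ₂ (t - L₁)) ≤ 1 * dist (s - L₁) (t - L₁) :=
            hlip₂ _ ⟨by linarith, by linarith [hs.2]⟩ _ ⟨by linarith, by linarith [ht.2]⟩
        _ = t - s := by rw [one_mul, Real.dist_eq, abs_of_nonpos (by linarith)]; ring
  refine ⟨g, L₁ + L₂, by linarith, ?_, ?_, ?_, ?_⟩
  · rw [lipschitzOnWith_iff_dist_le_mul]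
    intro s hs t ht
    rw [NNReal.coe_one, one_mul]
    rcases le_total s t with hst | hst
    · rw [Real.dist_eq, abs_of_nonpos (by linarith)]
      linarith [key s hs t ht hst]
    · rw [dist_comm, Real.dist_eq, abs_of_nonneg (by linarith)]
      linarith [key t ht s hs hst]
  · simp [hg, hL₁, h0₁]
  · by_cases hL2 : L₂ = 0
    · simp only [hg, hL2, add_zero, if_pos (le_refl L₁), hE₁, ← h0₂, ← hE₂, hL2]
    · have : ¬ (L₁ + L₂ ≤ L₁) := by
        rcases lt_or_eq_of_le hL₂ with h' | h'
        · linarith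
        · exact absurd h'.symm hL2
      simp [hg, this, hE₂]
  · intro t ht
    by_cases htL : t ≤ L₁
    · simpa [hg, htL] using hmem₁ t ⟨ht.1, htL⟩
    · push_neg at htL
      simpa [hg, htL.not_ge] using hmem₂ (t - L₁) ⟨by linarith, by linarith [ht.2]⟩

lemma qhPath_exists {D : Set E} (hD : IsOpen D) (hconn : IsConnected D)
    {x y : E} (hx : x ∈ D) (hy : y ∈ D) : ∃ γ L, IsQHPath D x y γ L := by
  set S : Set E := {w | ∃ γ L, IsQHPath D x w γ L} with hS
  have hSD : S ⊆ D := by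
    rintro w ⟨γ, L, hL, _, _, hE, hmem⟩
    rw [← hE]; exact hmem L ⟨hL, le_refl _⟩
  have hball : ∀ w ∈ D, ∃ ε > 0, ball w ε ⊆ D := fun w hw =>
    (Metric.isOpen_iff.mp hD) w hw
  have hSopen : IsOpen S := by
    rw [Metric.isOpen_iff]
    intro w hw
    obtain ⟨ε, hε, hsub⟩ := hball w (hSD hw)
    refine ⟨ε, hε, fun v hv => ?_⟩
    exact qhPath_trans hw (qhPath_segment D
      ((convex_ball w ε).segment_subset (mem_ball_self hε) hv |>.trans hsub))
  have hxS : x ∈ S := qhPath_segment D (by rw [segment_same]; exact singleton_subset_iff.2 hx)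
  have hsub : D ⊆ S := by
    apply hconn.isPreconnected.subset_of_closure_inter_subset hSopen ⟨x, hx, hxS⟩
    rintro w ⟨hwc, hwD⟩
    obtain ⟨ε, hε, hsubD⟩ := hball w hwD
    obtain ⟨v, hvS, hvb⟩ := Metric.mem_closure_iff.mp hwc ε hε
    have hvb' : v ∈ ball w ε := by rw [mem_ball, dist_comm]; exact hvb
    exact qhPath_trans hvS (qhPath_segment D
      ((convex_ball w ε).segment_subset hvb' (mem_ball_self hε) |>.trans hsubD))
  exact hsub hy

lemma qhLength_ge {D : Set E} (hD : IsOpen D) (hne : D ≠ univ) {x y : E} {γ : ℝ → E} {L : ℝ}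
    (hγ : IsQHPath D x y γ L) :
    Real.log (1 + ‖x - y‖ / infDist x Dᶜ) ≤ ∫ t in (0:ℝ)..L, 1 / infDist (γ t) Dᶜ := by
  obtain ⟨hL, hlip, h0, hE, hmem⟩ := hγ
  rw [lipschitzOnWith_iff_dist_le_mul] at hlip
  have hDc : Dᶜ.Nonempty := nonempty_compl.mpr hne
  have hDcl : IsClosed Dᶜ := hD.isClosed_compl
  set d0 := infDist x Dᶜ with hd0def
  have hxD : x ∈ D := h0 ▸ hmem 0 ⟨le_refl _, hL⟩
  have hd0 : 0 < d0 := by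
    rw [hd0def, ← hDcl.notMem_iff_infDist_pos hDc]
    exact fun h => h hxD
  have hpos : ∀ t ∈ Icc (0:ℝ) L, 0 < infDist (γ t) Dᶜ := by
    intro t ht
    rw [← hDcl.notMem_iff_infDist_pos hDc]
    simpa using hmem t ht
  have hub : ∀ t ∈ Icc (0:ℝ) L, infDist (γ t) Dᶜ ≤ d0 + t := by
    intro t ht
    calc infDist (γ t) Dᶜ ≤ infDist (γ 0) Dᶜ + dist (γ t) (γ 0) :=
          infDist_le_infDist_add_dist
      _ ≤ d0 + t := by
          have := hlip t ht 0 ⟨le_refl _, hL⟩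
          rw [h0]
          have ht' : dist t 0 = t := by rw [Real.dist_eq, sub_zero, abs_of_nonneg ht.1]
          simp only [NNReal.coe_one, one_mul, ht', h0] at this
          linarith
  have hcont : ContinuousOn (fun t => infDist (γ t) Dᶜ) (Icc 0 L) := by
    apply (continuous_infDist_pt _).comp_continuousOn
    rw [← lipschitzOnWith_iff_dist_le_mul] at hlip
    exact hlip.continuousOn
  have int1 : IntervalIntegrable (fun t => 1 / (d0 + t)) MeasureTheory.volume 0 L := by
    apply ContinuousOn.intervalIntegrable
    rw [uIcc_of_le hL]
    exact continuousOn_const.div (continuous_const.add continuous_id).continuousOn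
      (fun t ht => (add_pos_of_pos_of_nonneg hd0 ht.1).ne')
  have int2 : IntervalIntegrable (fun t => 1 / infDist (γ t) Dᶜ) MeasureTheory.volume 0 L := by
    apply ContinuousOn.intervalIntegrable
    rw [uIcc_of_le hL]
    exact continuousOn_const.div hcont (fun t ht => (hpos t ht).ne')
  have hmono : (∫ t in (0:ℝ)..L, 1 / (d0 + t)) ≤ ∫ t in (0:ℝ)..L, 1 / infDist (γ t) Dᶜ := by
    apply intervalIntegral.integral_mono_on hL int1 int2
    intro t ht
    exact one_div_le_one_div_of_le (hpos t ht) (hub t ht)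
  have hcalc : (∫ t in (0:ℝ)..L, 1 / (d0 + t)) = Real.log ((d0 + L) / d0) := by
    rw [intervalIntegral.integral_comp_add_left (fun u => 1 / u) d0, add_zero]
    exact integral_one_div (by
      rw [uIcc_of_le (by linarith)]
      rintro ⟨h1, _⟩; linarith)
  have hxy : ‖x - y‖ ≤ L := by
    rw [← h0, ← hE, ← dist_eq_norm]
    have := hlip 0 ⟨le_refl _, hL⟩ L ⟨hL, le_refl _⟩
    simp only [NNReal.coe_one, one_mul, Real.dist_eq, zero_sub, abs_neg,
      abs_of_nonneg hL] at this
    exact this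
  refine le_trans ?_ hmono
  rw [hcalc]
  have harg : (d0 + L) / d0 = 1 + L / d0 := by field_simp
  rw [harg]
  have h1 : (0:ℝ) < 1 + ‖x - y‖ / d0 := by positivity
  apply Real.log_le_log h1
  gcongr

lemma qhPath_reverse {D : Set E} {x y : E} {γ : ℝ → E} {L : ℝ}
    (h : IsQHPath D x y γ L) : IsQHPath D y x (fun t => γ (L - t)) L := by
  obtain ⟨hL, hlip, h0, hE, hmem⟩ := h
  rw [lipschitzOnWith_iff_dist_le_mul] at hlip
  refine ⟨hL, ?_, by simp [hE], by simp [h0], fun t ht =>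
    hmem (L - t) ⟨by linarith [ht.2], by linarith [ht.1]⟩⟩
  rw [lipschitzOnWith_iff_dist_le_mul]
  intro s hs t ht
  have : dist (L - s) (L - t) = dist s t := by
    rw [Real.dist_eq, Real.dist_eq, abs_sub_comm]; ring_nf
  calc dist (γ (L - s)) (γ (L - t)) ≤ ((1:NNReal):ℝ) * dist (L - s) (L - t) :=
        hlip _ ⟨by linarith [hs.2], by linarith [hs.1]⟩ _ ⟨by linarith [ht.2], by linarith [ht.1]⟩
    _ = ((1:NNReal):ℝ) * dist s t := by rw [this]

lemma rev_integral (D : Set E) (γ : ℝ → E) (L : ℝ) :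
    (∫ t in (0:ℝ)..L, 1 / infDist (γ (L - t)) Dᶜ) = ∫ t in (0:ℝ)..L, 1 / infDist (γ t) Dᶜ := by
  rw [intervalIntegral.integral_comp_sub_left (fun u => 1 / infDist (γ u) Dᶜ) L]
  norm_num

theorem stmt_6 (D : Set E) (hD : IsOpen D) (hconn : IsConnected D)
    (hne : D ≠ univ) (z₁ z₂ : E) (hz₁ : z₁ ∈ D) (hz₂ : z₂ ∈ D) :
    Real.log (1 + ‖z₁ - z₂‖ / min (infDist z₁ Dᶜ) (infDist z₂ Dᶜ)) ≤
      qhDist D z₁ z₂ := by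
  have hNE : Nonempty {p : (ℝ → E) × ℝ // IsQHPath D z₁ z₂ p.1 p.2} := by
    obtain ⟨γ, L, h⟩ := qhPath_exists hD hconn hz₁ hz₂
    exact ⟨⟨(γ, L), h⟩⟩
  apply le_ciInf
  rintro ⟨⟨γ, L⟩, hp⟩
  rcases le_total (infDist z₁ Dᶜ) (infDist z₂ Dᶜ) with hm | hm
  · rw [min_eq_left hm]
    exact qhLength_ge hD hne hp
  · rw [min_eq_right hm, norm_sub_rev]
    have := qhLength_ge hD hne (qhPath_reverse hp)
    rwa [rev_integral] at this
end

section
/- In the plane ℝ², let D' = B(0,1) \ [0,1), and for 0 < t < 1/4 let x' = (1/2, t), y' = (1/2, -t). Then the quasihyperbolic distance satisfies k_{D'}(x', y') ≥ log(1 + 1/t). -/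
open Metric Set

variable {E : Type*} [NormedAddCommGroup E] [NormedSpace ℝ E]

/-- The slit disk `B(0,1) \ [0,1)` in the Euclidean plane. -/
noncomputable def slitDisk : Set (EuclideanSpace ℝ (Fin 2)) :=
  ball 0 1 \ {p | p 1 = 0 ∧ 0 ≤ p 0 ∧ p 0 < 1}

/-- The point of the Euclidean plane with coordinates `(a, b)`. -/
noncomputable def pt (a b : ℝ) : EuclideanSpace ℝ (Fin 2) :=
  (WithLp.equiv 2 (Fin 2 → ℝ)).symm ![a, b]

/-! ### Auxiliary lemmas -/

lemma pt_apply_zero (a b : ℝ) : pt a b 0 = a := rfl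

lemma pt_apply_one (a b : ℝ) : pt a b 1 = b := rfl

lemma abs_coord_le (x : EuclideanSpace ℝ (Fin 2)) (i : Fin 2) : |x i| ≤ ‖x‖ := by
  rw [EuclideanSpace.norm_eq]
  rw [show |x i| = Real.sqrt (‖x i‖^2) by rw [Real.sqrt_sq_eq_abs]; simp]
  apply Real.sqrt_le_sqrt
  exact Finset.single_le_sum (f := fun j => ‖x j‖^2) (fun j _ => by positivity) (Finset.mem_univ i)

lemma norm_pt (a b : ℝ) : ‖pt a b‖ = Real.sqrt (a^2 + b^2) := by
  rw [EuclideanSpace.norm_eq, Fin.sum_univ_two]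
  simp [pt_apply_zero, pt_apply_one]

lemma pt_sub (a b c d : ℝ) : pt a b - pt c d = pt (a - c) (b - d) := by
  apply PiLp.ext
  intro i
  rw [PiLp.sub_apply]
  fin_cases i <;> rfl

lemma sqrt_add_sq_le (x y : ℝ) : Real.sqrt (x^2 + y^2) ≤ |x| + |y| := by
  rw [show |x| + |y| = Real.sqrt ((|x| + |y|)^2) from
    (Real.sqrt_sq (by positivity)).symm]
  apply Real.sqrt_le_sqrt
  nlinarith [abs_nonneg x, abs_nonneg y, sq_abs x, sq_abs y, mul_nonneg (abs_nonneg x) (abs_nonneg y)]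

lemma isOpen_slitDisk : IsOpen slitDisk := by
  have : slitDisk = ball 0 1 ∩ ({p : EuclideanSpace ℝ (Fin 2) | p 1 ≠ 0} ∪ {p | p 0 < 0}) := by
    ext p
    simp only [slitDisk, mem_diff, mem_inter_iff, mem_ball, mem_setOf_eq, mem_union]
    constructor
    · rintro ⟨hb, hs⟩
      refine ⟨hb, ?_⟩
      by_contra h
      push_neg at h
      obtain ⟨h1, h2⟩ := h
      have hp0 : p 0 < 1 := by
        have h3 := abs_coord_le p 0
        have : |p 0| < 1 := by
          calc |p 0| ≤ ‖p‖ := h3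
          _ < 1 := by simpa [dist_zero_right] using hb
        linarith [abs_lt.mp this]
      exact hs ⟨h1, h2, hp0⟩
    · rintro ⟨hb, h⟩
      refine ⟨hb, ?_⟩
      rintro ⟨h1, h2, _⟩
      rcases h with h | h
      · exact h h1
      · linarith
  rw [this]
  have hc : ∀ i : Fin 2, Continuous fun p : EuclideanSpace ℝ (Fin 2) => p i := fun i =>
    (EuclideanSpace.proj i).continuous
  exact isOpen_ball.inter ((isOpen_compl_iff.mpr (isClosed_eq (hc 1) continuous_const)).union
    (isOpen_lt (hc 0) continuous_const))

lemma infDist_pos_of_mem {x : EuclideanSpace ℝ (Fin 2)} (hx : x ∈ slitDisk) :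
    0 < infDist x slitDiskᶜ := by
  refine (isOpen_slitDisk.isClosed_compl.notMem_iff_infDist_pos ⟨0, ?_⟩).mp (by simpa using hx)
  simp only [mem_compl_iff, slitDisk, mem_diff, mem_ball, mem_setOf_eq, not_and, not_not]
  intro _
  push_neg
  exact ⟨rfl, le_rfl, by norm_num⟩

/-- Sum identity for the three time pieces of the explicit path. -/
lemma sum_pieces (t s : ℝ) (ht0 : 0 < t) :
    min s (3/4) + min (max (s - 3/4) 0) (2*t) + max (s - 3/4 - 2*t) 0 = s := by
  rcases le_total s (3/4) with h | h
  · rw [min_eq_left h, max_eq_right (by linarith), min_eq_left (by linarith),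
      max_eq_right (by linarith)]
    ring
  · rcases le_total s (3/4 + 2*t) with h2 | h2
    · rw [min_eq_right h, max_eq_left (by linarith), min_eq_left (by linarith),
        max_eq_right (by linarith)]
      ring
    · rw [min_eq_right h, max_eq_left (by linarith), min_eq_right (by linarith),
        max_eq_left (by linarith)]
      ring

/-- There exists an admissible path joining the two points of the theorem. -/
lemma path_nonempty (t : ℝ) (ht0 : 0 < t) (ht : t < 1/4) :
    Nonempty {p : (ℝ → EuclideanSpace ℝ (Fin 2)) × ℝ //
      IsQHPath slitDisk (pt (1/2) t) (pt (1/2) (-t)) p.1 p.2} := by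
  set A : ℝ → ℝ := fun s => min s (3/4) with hA
  set B : ℝ → ℝ := fun s => min (max (s - 3/4) 0) (2*t) with hB
  set C : ℝ → ℝ := fun s => max (s - 3/4 - 2*t) 0 with hC
  set γ : ℝ → EuclideanSpace ℝ (Fin 2) := fun s => pt (1/2 - A s + C s) (t - B s) with hγ
  set L : ℝ := 3/2 + 2*t with hLdef
  have hmonoA : Monotone A := fun x y h => min_le_min h le_rfl
  have hmonoB : Monotone B := fun x y h => min_le_min (max_le_max (by linarith) le_rfl) le_rfl
  have hmonoC : Monotone C := fun x y h => max_le_max (by linarith) le_rfl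
  have hsum : ∀ s, A s + B s + C s = s := fun s => sum_pieces t s ht0
  have hlip : LipschitzWith 1 γ := by
    apply LipschitzWith.of_dist_le_mul
    have key : ∀ s u : ℝ, u ≤ s → dist (γ s) (γ u) ≤ 1 * dist s u := by
      intro s u h
      have hAd : 0 ≤ A s - A u := by linarith [hmonoA h]
      have hBd : 0 ≤ B s - B u := by linarith [hmonoB h]
      have hCd : 0 ≤ C s - C u := by linarith [hmonoC h]
      have hsd : (A s - A u) + (B s - B u) + (C s - C u) = s - u := by
        have := hsum s; have := hsum u; linarith
      rw [dist_eq_norm, hγ]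
      simp only [pt_sub]
      rw [norm_pt]
      calc Real.sqrt ((1/2 - A s + C s - (1/2 - A u + C u))^2 + (t - B s - (t - B u))^2)
          ≤ |1/2 - A s + C s - (1/2 - A u + C u)| + |t - B s - (t - B u)| := sqrt_add_sq_le _ _
        _ ≤ ((A s - A u) + (C s - C u)) + (B s - B u) := by
            apply add_le_add
            · rw [abs_le]; constructor <;> [linarith; linarith]
            · rw [abs_le]; constructor <;> [linarith; linarith]
        _ ≤ s - u := by linarith
        _ ≤ 1 * dist s u := by rw [one_mul, Real.dist_eq]; exact (le_abs_self _)
    intro s u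
    rcases le_total u s with h | h
    · exact key s u h
    · rw [dist_comm (γ s), dist_comm s]; exact key u s h
  have hγ0 : γ 0 = pt (1/2) t := by
    have ha : A 0 = 0 := by rw [hA]; simp; norm_num
    have hb : B 0 = 0 := by
      rw [hB]; simp only
      rw [max_eq_right (by norm_num), min_eq_left (by linarith)]
    have hcc : C 0 = 0 := by rw [hC]; simp only; rw [max_eq_right (by linarith)]
    rw [hγ]; simp only [ha, hb, hcc]
    rw [show (1:ℝ)/2 - 0 + 0 = 1/2 by ring, show t - 0 = t by ring]
  have hγL : γ L = pt (1/2) (-t) := by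
    have ha : A L = 3/4 := by rw [hA, hLdef]; simp only; rw [min_eq_right (by linarith)]
    have hb : B L = 2*t := by
      rw [hB, hLdef]; simp only
      rw [max_eq_left (by linarith), min_eq_right (by linarith)]
    have hcc : C L = 3/4 := by
      rw [hC, hLdef]; simp only; rw [max_eq_left (by linarith)]; ring
    rw [hγ]; simp only [ha, hb, hcc]
    rw [show (1:ℝ)/2 - 3/4 + 3/4 = 1/2 by ring, show t - 2*t = -t by ring]
  have hmem : ∀ s ∈ Icc (0:ℝ) L, γ s ∈ slitDisk := by
    intro s hs
    obtain ⟨hs0, hsL⟩ := hs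
    have hA0 : 0 ≤ A s := le_min hs0 (by norm_num)
    have hA1 : A s ≤ 3/4 := min_le_right _ _
    have hB0 : 0 ≤ B s := le_min (le_max_right _ _) (by linarith)
    have hB1 : B s ≤ 2*t := min_le_right _ _
    have hC0 : 0 ≤ C s := le_max_right _ _
    have hfabs : |1/2 - A s + C s| ≤ 1/2 := by
      rcases le_total s (3/4 + 2*t) with h2 | h2
      · have hcc : C s = 0 := by rw [hC]; simp only; rw [max_eq_right (by linarith)]
        rw [hcc, abs_le]; constructor <;> linarith
      · have ha : A s = 3/4 := by rw [hA]; simp only; rw [min_eq_right (by linarith)]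
        have hc1 : C s ≤ 3/4 := by
          rw [hC]; simp only
          rw [max_eq_left (by linarith)]
          rw [hLdef] at hsL; linarith
        rw [ha, abs_le]; constructor <;> linarith
    have hgabs : |t - B s| ≤ t := by rw [abs_le]; constructor <;> linarith
    constructor
    · rw [mem_ball, dist_zero_right, hγ]
      simp only
      rw [norm_pt]
      calc Real.sqrt ((1/2 - A s + C s)^2 + (t - B s)^2)
          ≤ |1/2 - A s + C s| + |t - B s| := sqrt_add_sq_le _ _
        _ ≤ 1/2 + t := add_le_add hfabs hgabs
        _ < 1 := by linarith
    · rw [hγ]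
      simp only [mem_setOf_eq, pt_apply_zero, pt_apply_one, not_and]
      intro hg0
      -- t - B s = 0, so B s = t, hence s = 3/4 + t and the first coordinate is -1/4
      have hBt : B s = t := by linarith
      have hmax : max (s - 3/4) 0 = t := by
        rw [hB] at hBt
        simp only at hBt
        rcases le_total (max (s - 3/4) 0) (2*t) with h | h
        · rwa [min_eq_left h] at hBt
        · rw [min_eq_right h] at hBt; linarith
      have hst : s = 3/4 + t := by
        rcases le_total (s - 3/4) 0 with h | h
        · rw [max_eq_right h] at hmax; linarith
        · rw [max_eq_left h] at hmax; linarith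
      have ha : A s = 3/4 := by rw [hA, hst]; simp only; rw [min_eq_right (by linarith)]
      have hcc : C s = 0 := by rw [hC, hst]; simp only; rw [max_eq_right (by linarith)]
      rw [ha, hcc]
      intro hb1
      exfalso
      linarith
  exact ⟨⟨⟨γ, L⟩, by positivity, hlip.lipschitzOnWith, hγ0, hγL, hmem⟩⟩

theorem stmt_14 (t : ℝ) (ht0 : 0 < t) (ht : t < 1 / 4) :
    Real.log (1 + 1 / t) ≤ qhDist slitDisk (pt (1 / 2) t) (pt (1 / 2) (-t)) := by
  have hne := path_nonempty t ht0 (by linarith)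
  apply le_ciInf
  rintro ⟨⟨γ, L⟩, hL0, hlip, h0, hL, hmem⟩
  dsimp only at hL0 hlip h0 hL hmem ⊢
  -- x' = pt (1/2) t is at distance ≤ t from the slit
  have hx : infDist (pt (1/2) t) slitDiskᶜ ≤ t := by
    have hslit : pt (1/2) 0 ∈ slitDiskᶜ := fun h =>
      h.2 ⟨rfl, by rw [pt_apply_zero]; norm_num, by rw [pt_apply_zero]; norm_num⟩
    calc infDist (pt (1/2) t) slitDiskᶜ ≤ dist (pt (1/2) t) (pt (1/2) 0) :=
          infDist_le_dist_of_mem hslit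
      _ = t := by
          rw [dist_eq_norm, pt_sub, norm_pt]
          simp only [sub_self, sub_zero]
          rw [show (0:ℝ)^2 + t^2 = t^2 by ring, Real.sqrt_sq ht0.le]
  -- pointwise bound on infDist along the curve
  have hub : ∀ s ∈ Icc (0:ℝ) L, infDist (γ s) slitDiskᶜ ≤ t + s := by
    intro s hs
    have h1 : infDist (γ s) slitDiskᶜ ≤ infDist (γ 0) slitDiskᶜ + dist (γ s) (γ 0) :=
      infDist_le_infDist_add_dist
    have h2 : dist (γ s) (γ 0) ≤ 1 * dist s 0 :=
      hlip.dist_le_mul s hs 0 ⟨le_rfl, hL0⟩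
    rw [one_mul, Real.dist_eq, sub_zero, abs_of_nonneg hs.1] at h2
    rw [h0] at h1 h2
    linarith
  have hpos : ∀ s ∈ Icc (0:ℝ) L, 0 < infDist (γ s) slitDiskᶜ := fun s hs =>
    infDist_pos_of_mem (hmem s hs)
  -- integrability
  have hcont : ContinuousOn (fun s => infDist (γ s) slitDiskᶜ) (Icc 0 L) :=
    (continuous_infDist_pt _).comp_continuousOn hlip.continuousOn
  have hint1 : IntervalIntegrable (fun s => 1 / infDist (γ s) slitDiskᶜ)
      MeasureTheory.volume 0 L := by
    apply ContinuousOn.intervalIntegrable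
    rw [uIcc_of_le hL0]
    exact continuousOn_const.div hcont fun s hs => (hpos s hs).ne'
  have hint2 : IntervalIntegrable (fun s => 1 / (t + s)) MeasureTheory.volume 0 L := by
    apply ContinuousOn.intervalIntegrable
    rw [uIcc_of_le hL0]
    exact continuousOn_const.div (continuousOn_const.add continuousOn_id)
      (fun s hs => by nlinarith [hs.1])
  -- comparison
  have hcomp : (∫ s in (0:ℝ)..L, 1 / (t + s)) ≤ qhLength slitDisk γ L := by
    unfold qhLength
    apply intervalIntegral.integral_mono_on hL0 hint2 hint1
    intro s hs
    exact one_div_le_one_div_of_le (hpos s hs) (hub s hs)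
  -- compute the comparison integral
  have hcalc : (∫ s in (0:ℝ)..L, 1 / (t + s)) = Real.log ((L + t) / t) := by
    have : (∫ s in (0:ℝ)..L, 1 / (t + s)) = ∫ s in (0:ℝ)..L, (fun x => 1 / x) (s + t) := by
      congr 1; ext s; rw [add_comm]
    rw [this, intervalIntegral.integral_comp_add_right (fun x => 1 / x) t, zero_add]
    apply integral_one_div
    rw [uIcc_of_le (by linarith)]
    intro h
    exact absurd h.1 (by linarith)
  -- the curve has length at least 1
  have hL1 : 1 ≤ L := by
    have hccont : ContinuousOn (fun s => γ s 1) (Icc 0 L) :=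
      (EuclideanSpace.proj (1 : Fin 2)).continuous.comp_continuousOn hlip.continuousOn
    have hv0 : γ 0 1 = t := by rw [h0]; rfl
    have hvL : γ L 1 = -t := by rw [hL]; rfl
    have hmm : (0:ℝ) ∈ Icc (γ L 1) (γ 0 1) := by
      rw [hv0, hvL]; exact ⟨by linarith, by linarith⟩
    obtain ⟨s, hs, hγs1⟩ := intermediate_value_Icc' hL0 hccont hmm
    have hγs : γ s ∈ slitDisk := hmem s hs
    obtain ⟨hball, hslit⟩ := hγs
    have hnorm : ‖γ s‖ < 1 := by rwa [mem_ball, dist_zero_right] at hball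
    have hlt1 : γ s 0 < 1 := by
      have := abs_coord_le (γ s) 0
      have : |γ s 0| < 1 := lt_of_le_of_lt this hnorm
      linarith [abs_lt.mp this]
    have hneg : γ s 0 < 0 := by
      by_contra h
      push_neg at h
      exact hslit ⟨hγs1, h, hlt1⟩
    -- distance from γ 0 to γ s is at least 1/2
    have hd1 : (1:ℝ)/2 ≤ dist (γ 0) (γ s) := by
      have h1 : |(γ 0 - γ s) 0| ≤ ‖γ 0 - γ s‖ := abs_coord_le _ 0
      rw [PiLp.sub_apply, h0, pt_apply_zero] at h1
      rw [dist_eq_norm]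
      calc (1:ℝ)/2 ≤ |1/2 - γ s 0| := by rw [abs_of_pos (by linarith)]; linarith
        _ ≤ ‖γ 0 - γ s‖ := by rw [h0]; exact h1
    have hd2 : (1:ℝ)/2 ≤ dist (γ L) (γ s) := by
      have h1 : |(γ L - γ s) 0| ≤ ‖γ L - γ s‖ := abs_coord_le _ 0
      rw [PiLp.sub_apply, hL, pt_apply_zero] at h1
      rw [dist_eq_norm]
      calc (1:ℝ)/2 ≤ |1/2 - γ s 0| := by rw [abs_of_pos (by linarith)]; linarith
        _ ≤ ‖γ L - γ s‖ := by rw [hL]; exact h1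
    have hb1 : dist (γ 0) (γ s) ≤ s := by
      have := hlip.dist_le_mul 0 ⟨le_rfl, hL0⟩ s hs
      simp only [NNReal.coe_one, one_mul, Real.dist_eq, zero_sub, abs_neg] at this
      rwa [abs_of_nonneg hs.1] at this
    have hb2 : dist (γ L) (γ s) ≤ L - s := by
      have := hlip.dist_le_mul L ⟨hL0, le_rfl⟩ s hs
      simp only [NNReal.coe_one, one_mul, Real.dist_eq] at this
      rwa [abs_of_nonneg (by linarith [hs.2])] at this
    linarith
  -- conclude
  have hfin : Real.log (1 + 1 / t) ≤ Real.log ((L + t) / t) := by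
    apply (Real.log_le_log_iff (by positivity) (by positivity)).mpr
    rw [le_div_iff₀ ht0]
    have h1t : (1 + 1/t) * t = t + 1 := by field_simp
    rw [h1t]
    linarith
  calc Real.log (1 + 1 / t) ≤ Real.log ((L + t) / t) := hfin
    _ = ∫ s in (0:ℝ)..L, 1 / (t + s) := hcalc.symm
    _ ≤ qhLength slitDisk γ L := hcomp
end
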